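/- (Validation of the supermartingale condition by discretization.) Suppose every s ∈ S \ S_u lies within ℓ¹-distance τ of some point s̃ ∈ S̃ \ S_u. Set ζ = τ·L_B·(1 + L_f·(1 + L_π)). If for every s̃ ∈ S̃ \ S_u one has ∫ B(f(s̃, π(s̃+δ))) dμ(δ) ≤ B(s̃) − ζ, then for every s ∈ S \ S_u one has ∫ B(f(s, π(s+δ))) dμ(δ) − B(s) ≤ 0. -/

import Mathlib

open MeasureTheory

/-- The ℓ¹ distance on `Fin d → ℝ`. -/
def dist1 {d : ℕ} (x y : Fin d → ℝ) : ℝ := ∑ i, |x i - y i|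

/-- Validation of the supermartingale condition by discretization. -/
theorem validate_supermartingale_condition
    {n m : ℕ}
    (f : (Fin n → ℝ) → (Fin m → ℝ) → (Fin n → ℝ))
    (pol : (Fin n → ℝ) → (Fin m → ℝ))
    (B : (Fin n → ℝ) → ℝ)
    (Lf Lpi LB : ℝ) (hLf0 : 0 ≤ Lf) (hLpi0 : 0 ≤ Lpi) (hLB0 : 0 ≤ LB)
    -- Lipschitz continuity w.r.t. the ℓ¹ norms (sum metric on the product)
    (hf : ∀ s s' a a', dist1 (f s a) (f s' a') ≤ Lf * (dist1 s s' + dist1 a a'))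
    (hpi : ∀ s s', dist1 (pol s) (pol s') ≤ Lpi * dist1 s s')
    (hB : ∀ s s', |B s - B s'| ≤ LB * dist1 s s')
    (μ : Measure (Fin n → ℝ)) [IsProbabilityMeasure μ]
    (hint : ∀ s, Integrable (fun δ => B (f s (pol (s + δ)))) μ)
    (S Su Stil : Set (Fin n → ℝ)) (hSuS : Su ⊆ S) (hStilS : Stil ⊆ S)
    (τ : ℝ) (hτ : 0 < τ)
    -- every state of `S \ Su` is within ℓ¹-distance `τ` of the discretization
    (hcover : ∀ s ∈ S \ Su, ∃ st ∈ Stil \ Su, dist1 s st ≤ τ)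
    (hval : ∀ st ∈ Stil \ Su,
      ∫ δ, B (f st (pol (st + δ))) ∂μ ≤ B st - τ * LB * (1 + Lf * (1 + Lpi))) :
    ∀ s ∈ S \ Su, (∫ δ, B (f s (pol (s + δ))) ∂μ) - B s ≤ 0 := by
  intro s hs
  obtain ⟨st, hst, hdist⟩ := hcover s hs
  have hd0 : 0 ≤ dist1 s st := Finset.sum_nonneg fun i _ => abs_nonneg _
  have key : ∀ δ, B (f s (pol (s + δ))) ≤ B (f st (pol (st + δ))) + LB * Lf * (1 + Lpi) * τ := by
    intro δ
    have hshift : dist1 (s + δ) (st + δ) = dist1 s st := by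
      unfold dist1; apply Finset.sum_congr rfl; intro i _
      simp [Pi.add_apply]
    have h1 : |B (f s (pol (s + δ))) - B (f st (pol (st + δ)))|
        ≤ LB * dist1 (f s (pol (s + δ))) (f st (pol (st + δ))) := hB _ _
    have h2 := hf s st (pol (s + δ)) (pol (st + δ))
    have h3 := hpi (s + δ) (st + δ)
    rw [hshift] at h3
    have h4 : dist1 (f s (pol (s + δ))) (f st (pol (st + δ))) ≤ Lf * ((1 + Lpi) * τ) := by
      calc dist1 (f s (pol (s + δ))) (f st (pol (st + δ)))
          ≤ Lf * (dist1 s st + dist1 (pol (s + δ)) (pol (st + δ))) := h2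
        _ ≤ Lf * ((1 + Lpi) * τ) := by
            apply mul_le_mul_of_nonneg_left _ hLf0
            have : dist1 (pol (s + δ)) (pol (st + δ)) ≤ Lpi * τ :=
              h3.trans (mul_le_mul_of_nonneg_left hdist hLpi0)
            nlinarith
    have h5 := (abs_le.mp h1).2
    nlinarith [mul_le_mul_of_nonneg_left h4 hLB0]
  have hI : (∫ δ, B (f s (pol (s + δ))) ∂μ)
      ≤ (∫ δ, B (f st (pol (st + δ))) ∂μ) + LB * Lf * (1 + Lpi) * τ := by
    have h := integral_mono (hint s) ((hint st).add (integrable_const _)) key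
    simp only [Pi.add_apply] at h
    rwa [integral_add (hint st) (integrable_const _), integral_const, probReal_univ,
      smul_eq_mul, one_mul] at h
  have hBst : B st ≤ B s + LB * τ := by
    have h1 := (abs_le.mp (hB st s)).2
    have : dist1 st s = dist1 s st := by
      unfold dist1; apply Finset.sum_congr rfl; intro i _; rw [abs_sub_comm]
    rw [this] at h1
    nlinarith [mul_le_mul_of_nonneg_left hdist hLB0]
  have hv := hval st hst
  nlinarith
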